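/- Let X be a Ptolemy metric space (satisfying the Ptolemy inequality d(x,z)d(y,u) ≤ d(x,y)d(z,u) + d(x,u)d(y,z) for all quadruples). Let ℓ, ℓ' be Busemann parallel geodesic lines in X with common Busemann function b, and let x, y ∈ ℓ, x', y' ∈ ℓ' with b(x) = b(x') and b(y) = b(y'). Assume there are symmetries of X fixing horospheres of b pointwise-on-level and exchanging equidistant levels (i.e., for each horosphere H there is an isometry φ of X fixing H pointwise level-wise with φ(ℓ) = ℓ, φ(ℓ') = ℓ', reflecting the b-coordinate). Then d(x,y) = d(x',y'), d(x,x') = d(y,y'), d(x,y') = d(y,x'), and d(x',y) ≥ d(x,x'). -/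
import Mathlib

/-- A symmetry reflecting the Busemann coordinate acts on a parametrized line
by `u ↦ -(2β) - u`. -/
lemma refl_on_line {X : Type*} (b : X → ℝ) (β : ℝ) (ℓ : ℝ → X)
    (hb : ∀ t : ℝ, b (ℓ t) = -t) (φ : X → X)
    (him : φ '' Set.range ℓ = Set.range ℓ)
    (hφb : ∀ p, b (φ p) = 2 * β - b p) (u : ℝ) :
    φ (ℓ u) = ℓ (-(2 * β) - u) := by
  have hmem : φ (ℓ u) ∈ Set.range ℓ := by
    rw [← him]; exact ⟨ℓ u, Set.mem_range_self u, rfl⟩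
  obtain ⟨v, hv⟩ := hmem
  have hbv : b (φ (ℓ u)) = 2 * β - b (ℓ u) := hφb _
  rw [← hv, hb, hb] at hbv
  have hveq : v = -(2 * β) - u := by linarith
  rw [← hv, hveq]

/-- in a Ptolemy metric space, for Busemann parallel lines `ℓ, ℓ'` with
common Busemann function `b` admitting symmetries w.r.t. all horospheres, points
`x, y ∈ ℓ`, `x', y' ∈ ℓ'` at equal levels satisfy `d(x,y) = d(x',y')`,
`d(x,x') = d(y,y')`, `d(x,y') = d(y,x')` and `d(x',y) ≥ d(x,x')`. -/
theorem equal_level_distances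
    {X : Type*} [MetricSpace X]
    (hpt : ∀ x y z u : X,
      dist x z * dist y u ≤ dist x y * dist z u + dist x u * dist y z)
    (c c' : ℝ → X)
    (hc : ∀ s t : ℝ, dist (c s) (c t) = |s - t|)
    (hc' : ∀ s t : ℝ, dist (c' s) (c' t) = |s - t|)
    (b : X → ℝ)
    (hbc : ∀ t : ℝ, b (c t) = -t) (hbc' : ∀ t : ℝ, b (c' t) = -t)
    (hsym : ∀ β : ℝ, ∃ φ : X → X, Isometry φ ∧ φ ∘ φ = id ∧
      (∀ p, b p = β → φ p = p) ∧ (∀ p, b (φ p) = 2 * β - b p) ∧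
      φ '' Set.range c = Set.range c ∧ φ '' Set.range c' = Set.range c')
    (x y x' y' : X)
    (hx : x ∈ Set.range c) (hy : y ∈ Set.range c)
    (hx' : x' ∈ Set.range c') (hy' : y' ∈ Set.range c')
    (hbx : b x = b x') (hby : b y = b y') :
    dist x y = dist x' y' ∧ dist x x' = dist y y' ∧ dist x y' = dist y x' ∧
      dist x x' ≤ dist x' y := by
  obtain ⟨s, rfl⟩ := hx
  obtain ⟨t, rfl⟩ := hy
  obtain ⟨s₁, rfl⟩ := hx'
  obtain ⟨t₁, rfl⟩ := hy'
  rw [hbc, hbc'] at hbx hby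
  have hs₁ : s = s₁ := by linarith
  have ht₁ : t = t₁ := by linarith
  subst hs₁ ht₁
  -- the symmetry exchanging levels of x and y
  obtain ⟨φ₁, hiso₁, -, -, hb₁, him₁, him₁'⟩ := hsym (-(s + t) / 2)
  have e1 : φ₁ (c s) = c t := by
    rw [refl_on_line b (-(s + t) / 2) c hbc φ₁ him₁ hb₁ s]; congr 1; ring
  have e2 : φ₁ (c' s) = c' t := by
    rw [refl_on_line b (-(s + t) / 2) c' hbc' φ₁ him₁' hb₁ s]; congr 1; ring
  have e4 : φ₁ (c' t) = c' s := by
    rw [refl_on_line b (-(s + t) / 2) c' hbc' φ₁ him₁' hb₁ t]; congr 1; ring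
  -- the symmetry fixing the level of x
  obtain ⟨φ₂, hiso₂, -, -, hb₂, him₂, him₂'⟩ := hsym (-s)
  have e5 : φ₂ (c s) = c s := by
    rw [refl_on_line b (-s) c hbc φ₂ him₂ hb₂ s]; congr 1; ring
  have e6 : φ₂ (c' t) = c' (2 * s - t) := by
    rw [refl_on_line b (-s) c' hbc' φ₂ him₂' hb₂ t]; congr 1; ring
  have key2 : dist (c s) (c' s) = dist (c t) (c' t) := by
    calc dist (c s) (c' s) = dist (φ₁ (c s)) (φ₁ (c' s)) := (hiso₁.dist_eq _ _).symm
      _ = dist (c t) (c' t) := by rw [e1, e2]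
  have key3 : dist (c s) (c' t) = dist (c t) (c' s) := by
    calc dist (c s) (c' t) = dist (φ₁ (c s)) (φ₁ (c' t)) := (hiso₁.dist_eq _ _).symm
      _ = dist (c t) (c' s) := by rw [e1, e4]
  have h4 : dist (c s) (c' (2 * s - t)) = dist (c s) (c' t) := by
    calc dist (c s) (c' (2 * s - t)) = dist (φ₂ (c s)) (φ₂ (c' t)) := by rw [e5, e6]
      _ = dist (c s) (c' t) := hiso₂.dist_eq _ _
  refine ⟨by rw [hc, hc'], key2, key3, ?_⟩
  rcases eq_or_ne s t with h | h
  · subst h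
    rw [dist_comm]
  · have habs : 0 < |s - t| := abs_pos.mpr (sub_ne_zero.mpr h)
    have hp := hpt (c s) (c' (2 * s - t)) (c' s) (c' t)
    rw [h4] at hp
    simp only [hc'] at hp
    have ha1 : |2 * s - t - t| = 2 * |s - t| := by
      rw [show (2 * s - t - t) = 2 * (s - t) by ring, abs_mul]
      norm_num
    have ha2 : |2 * s - t - s| = |s - t| := by congr 1; ring
    rw [ha1, ha2] at hp
    have hgoal : dist (c s) (c' s) ≤ dist (c s) (c' t) := by nlinarith
    calc dist (c s) (c' s) ≤ dist (c s) (c' t) := hgoal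
      _ = dist (c' s) (c t) := by rw [key3, dist_comm]
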